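/- As real z → ∞, r̃(1, 2z/(z-1)², z) is asymptotically equivalent to (1/2)e^z; equivalently, since r̃(1, 2z/(z-1)², z) = e^z · Γ(z,z)/Γ(z), the ratio Γ(z,z)/Γ(z) tends to 1/2 as z → ∞ along the reals. -/

import Mathlib

open Filter Asymptotics

/-- The upper incomplete gamma function `Γ(z,x) = ∫_x^∞ t^{z-1} e^{-t} dt`. -/
noncomputable def upperGamma (z x : ℝ) : ℝ :=
  ∫ t in Set.Ioi x, t ^ (z - 1) * Real.exp (-t)

open Set Topology MeasureTheory

open Set

lemma log_ineq_pos {u : ℝ} (hu : 0 ≤ u) :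
    Real.log (1 + u) ≤ u - u ^ 2 / (2 * (1 + u)) := by
  set f : ℝ → ℝ := fun u => u - u ^ 2 / (2 * (1 + u)) - Real.log (1 + u) with hf
  have key : ∀ x : ℝ, 0 < x → HasDerivAt f (x ^ 2 / (2 * (1 + x) ^ 2)) x := by
    intro x hx
    have hx1 : (0:ℝ) < 1 + x := by linarith
    have d1 : HasDerivAt (fun u : ℝ => u ^ 2) (2 * x) x := by
      simpa [mul_comm] using hasDerivAt_pow 2 x
    have d2 : HasDerivAt (fun u : ℝ => 2 * (1 + u)) 2 x := by
      simpa using ((hasDerivAt_id x).const_add (1:ℝ)).const_mul 2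
    have d3 := d1.div d2 (by positivity)
    have d4 : HasDerivAt (fun u : ℝ => Real.log (1 + u)) (1 / (1 + x)) x := by
      simpa [one_div] using ((hasDerivAt_id x).const_add (1:ℝ)).log (by positivity)
    have d5 := ((hasDerivAt_id x).sub d3).sub d4
    refine d5.congr_deriv ?_
    field_simp
    ring
  have hcont : ContinuousOn f (Ici (0:ℝ)) := by
    apply ContinuousOn.sub
    · apply ContinuousOn.sub continuousOn_id
      apply ContinuousOn.div (by fun_prop) (by fun_prop)
      intro x hx; simp only [mem_Ici] at hx; positivity
    · apply Real.continuousOn_log.comp (by fun_prop)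
      intro x hx; simp only [mem_Ici] at hx
      simp only [mem_compl_iff, mem_singleton_iff]
      positivity
  have hmono : MonotoneOn f (Ici (0:ℝ)) := by
    apply monotoneOn_of_deriv_nonneg (convex_Ici 0) hcont
    · intro x hx
      rw [interior_Ici] at hx
      exact ((key x hx).differentiableAt).differentiableWithinAt
    · intro x hx
      rw [interior_Ici] at hx
      rw [(key x hx).deriv]
      positivity
  have h0 : f 0 = 0 := by simp [hf]
  have := hmono self_mem_Ici (mem_Ici.mpr hu) hu
  rw [h0] at this
  simp only [hf] at this
  linarith

lemma log_ineq_neg {u : ℝ} (hu1 : -1 < u) (hu : u ≤ 0) :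
    Real.log (1 + u) ≤ u - u ^ 2 / 2 := by
  set f : ℝ → ℝ := fun u => u - u ^ 2 / 2 - Real.log (1 + u) with hf
  have key : ∀ x : ℝ, -1 < x → HasDerivAt f (-(x ^ 2) / (1 + x)) x := by
    intro x hx
    have hx1 : (0:ℝ) < 1 + x := by linarith
    have d1 : HasDerivAt (fun u : ℝ => u ^ 2 / 2) x x := by
      simpa [mul_comm] using (hasDerivAt_pow 2 x).div_const 2
    have d4 : HasDerivAt (fun u : ℝ => Real.log (1 + u)) (1 / (1 + x)) x := by
      simpa [one_div] using ((hasDerivAt_id x).const_add (1:ℝ)).log (by positivity)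
    have d5 := ((hasDerivAt_id x).sub d1).sub d4
    refine d5.congr_deriv ?_
    field_simp
    ring
  have hcont : ContinuousOn f (Ioc (-1:ℝ) 0) := by
    apply ContinuousOn.sub
    · exact ContinuousOn.sub continuousOn_id (by fun_prop)
    · apply Real.continuousOn_log.comp (by fun_prop)
      intro x hx; simp only [mem_Ioc] at hx
      simp only [mem_compl_iff, mem_singleton_iff]
      nlinarith [hx.1]
  have hmono : AntitoneOn f (Ioc (-1:ℝ) 0) := by
    apply antitoneOn_of_deriv_nonpos (convex_Ioc (-1) 0) hcont
    · intro x hx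
      rw [interior_Ioc] at hx
      exact ((key x hx.1).differentiableAt).differentiableWithinAt
    · intro x hx
      rw [interior_Ioc] at hx
      rw [(key x hx.1).deriv]
      have h1 : (0:ℝ) < 1 + x := by linarith [hx.1]
      have h2 : (0:ℝ) ≤ x ^ 2 := sq_nonneg x
      apply div_nonpos_of_nonpos_of_nonneg (by linarith) h1.le
  have h0 : f 0 = 0 := by simp [hf]
  have := hmono (mem_Ioc.mpr ⟨hu1, hu⟩) (mem_Ioc.mpr ⟨by norm_num, le_refl 0⟩) hu
  rw [h0] at this
  simp only [hf] at this
  linarith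

noncomputable def efun (z s : ℝ) : ℝ :=
  Real.exp ((z - 1) * Real.log (1 + s / Real.sqrt z) - Real.sqrt z * s)

lemma tendsto_sqrt_atTop : Tendsto Real.sqrt atTop atTop := by
  rw [Filter.tendsto_atTop_atTop]
  intro b
  refine ⟨max (b ^ 2) 0, fun a ha => ?_⟩
  have h0 : (0:ℝ) ≤ a := le_trans (le_max_right _ _) ha
  have h1 : b ^ 2 ≤ a := le_trans (le_max_left _ _) ha
  rcases le_or_gt b 0 with hb | hb
  · exact le_trans hb (Real.sqrt_nonneg a)
  · rw [show b = Real.sqrt (b ^ 2) by rw [Real.sqrt_sq hb.le]]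
    exact Real.sqrt_le_sqrt h1

lemma tendsto_Ew (s : ℝ) :
    Tendsto (fun w : ℝ => (w ^ 2 - 1) * Real.log (1 + s / w) - w * s) atTop
      (𝓝 (-s ^ 2 / 2)) := by
  have hsw : Tendsto (fun w : ℝ => s / w) atTop (𝓝 0) := by
    simpa using tendsto_const_nhds.div_atTop (tendsto_id (α := ℝ))
  have hlog : Tendsto (fun w : ℝ => Real.log (1 + s / w)) atTop (𝓝 0) := by
    have h1 : Tendsto (fun w : ℝ => 1 + s / w) atTop (𝓝 1) := by
      simpa using tendsto_const_nhds.add hsw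
    have := ((Real.continuousAt_log (one_ne_zero)).tendsto).comp h1
    simpa [Real.log_one, Function.comp_def] using this
  have key0 : Tendsto (fun w : ℝ => w ^ 2 * (Real.log (1 + s / w) - s / w) + s ^ 2 / 2)
      atTop (𝓝 0) := by
    apply squeeze_zero_norm' (a := fun w => 2 * |s| ^ 3 / w)
    · filter_upwards [eventually_ge_atTop (2 * |s| + 1)] with w hw
      have habs : (0:ℝ) ≤ |s| := abs_nonneg s
      have hw1 : (1:ℝ) ≤ w := by linarith
      have hw0 : (0:ℝ) < w := by linarith
      have hxlt : |s| / w < 1 / 2 := by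
        rw [div_lt_iff₀ hw0]; nlinarith
      have hx : |-(s / w)| < 1 := by
        rw [abs_neg, abs_div, abs_of_pos hw0]
        linarith
      have hb := Real.abs_log_sub_add_sum_range_le hx 2
      have hsum : ∑ i ∈ Finset.range 2, (-(s / w)) ^ (i + 1) / (i + 1)
          = -(s / w) + (s / w) ^ 2 / 2 := by
        rw [Finset.sum_range_succ, Finset.sum_range_one]
        norm_num
      rw [hsum] at hb
      have hlg : (1 : ℝ) - -(s / w) = 1 + s / w := by ring
      rw [hlg] at hb
      have habs2 : |-(s/w)| = |s| / w := by rw [abs_neg, abs_div, abs_of_pos hw0]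
      rw [habs2] at hb
      -- hb : |(-(s/w) + (s/w)^2/2) + log (1 + s/w)| ≤ (|s|/w)^3 / (1 - |s|/w)
      have heq : w ^ 2 * (Real.log (1 + s / w) - s / w) + s ^ 2 / 2
          = w ^ 2 * ((-(s / w) + (s / w) ^ 2 / 2) + Real.log (1 + s / w)) := by
        field_simp
        ring
      rw [Real.norm_eq_abs, heq, abs_mul, abs_of_nonneg (sq_nonneg w)]
      norm_num at hb
      have hstep : (|s| / w) ^ 3 / (1 - |s| / w) ≤ 2 * |s| ^ 3 / w ^ 3 := by
        have hd : (1:ℝ) / 2 ≤ 1 - |s| / w := by linarith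
        have h1 : (|s| / w) ^ 3 / (1 - |s| / w) ≤ (|s| / w) ^ 3 / (1 / 2) :=
          div_le_div_of_nonneg_left (by positivity) (by norm_num) hd
        calc (|s| / w) ^ 3 / (1 - |s| / w) ≤ (|s| / w) ^ 3 / (1 / 2) := h1
          _ = 2 * |s| ^ 3 / w ^ 3 := by rw [div_pow]; ring
      calc w ^ 2 * |(-(s / w) + (s / w) ^ 2 / 2) + Real.log (1 + s / w)|
          ≤ w ^ 2 * ((|s| / w) ^ 3 / (1 - |s| / w)) := by
            apply mul_le_mul_of_nonneg_left hb (sq_nonneg w)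
        _ ≤ w ^ 2 * (2 * |s| ^ 3 / w ^ 3) := by
            apply mul_le_mul_of_nonneg_left hstep (sq_nonneg w)
        _ = 2 * |s| ^ 3 / w := by field_simp
    · have : Tendsto (fun w : ℝ => 2 * |s| ^ 3 / w) atTop (𝓝 0) := by
        simpa using tendsto_const_nhds.div_atTop (tendsto_id (α := ℝ))
      exact this
  have key : Tendsto (fun w : ℝ => w ^ 2 * (Real.log (1 + s / w) - s / w)) atTop
      (𝓝 (-s ^ 2 / 2)) := by
    have := key0.sub (tendsto_const_nhds (x := s ^ 2 / 2) (f := atTop))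
    simpa [neg_div] using this
  have final := key.sub hlog
  rw [sub_zero] at final
  apply final.congr'
  filter_upwards [eventually_ge_atTop (1:ℝ)] with w hw
  have hw0 : w ≠ 0 := by linarith
  field_simp
  ring

lemma tendsto_E (s : ℝ) :
    Tendsto (fun z : ℝ => (z - 1) * Real.log (1 + s / Real.sqrt z) - Real.sqrt z * s) atTop
      (𝓝 (-s ^ 2 / 2)) := by
  have h := (tendsto_Ew s).comp tendsto_sqrt_atTop
  apply h.congr'
  filter_upwards [eventually_ge_atTop (0:ℝ)] with z hz
  simp only [Function.comp_apply, Real.sq_sqrt hz]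

lemma tendsto_efun (s : ℝ) :
    Tendsto (fun z : ℝ => efun z s) atTop (𝓝 (Real.exp (-s ^ 2 / 2))) :=
  (Real.continuous_exp.continuousAt.tendsto).comp (tendsto_E s)

lemma exponent_bound {z s : ℝ} (hz : 4 ≤ z) (hs : -Real.sqrt z < s) :
    (z - 1) * Real.log (1 + s / Real.sqrt z) - Real.sqrt z * s ≤ 2 - |s| / 8 := by
  set w := Real.sqrt z with hwdef
  have hwsq : w ^ 2 = z := Real.sq_sqrt (by linarith)
  have hw2 : 2 ≤ w := by
    rw [hwdef, show (2:ℝ) = Real.sqrt 4 by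
      rw [show (4:ℝ) = 2 ^ 2 by norm_num, Real.sqrt_sq (by norm_num)]]
    exact Real.sqrt_le_sqrt hz
  have hw0 : 0 < w := by linarith
  set u := s / w with hudef
  have hu1 : -1 < u := by
    rw [hudef, lt_div_iff₀ hw0]
    linarith
  have hsu : u * w = s := div_mul_cancel₀ s hw0.ne'
  have hzu2 : z * u ^ 2 = s ^ 2 := by
    rw [← hwsq, hudef]
    field_simp
  have hws : w * s = z * u := by rw [← hsu, ← hwsq]; ring
  have hz1 : (3:ℝ) ≤ z - 1 := by linarith
  rcases le_or_gt 0 s with hs0 | hs0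
  · -- positive case
    have hu0 : 0 ≤ u := div_nonneg hs0 hw0.le
    have hp : (0:ℝ) < 1 + u := by linarith
    have hus : u ≤ s := by
      rw [hudef]
      calc s / w ≤ s / 1 := div_le_div_of_nonneg_left hs0 (by norm_num) (by linarith) |>.trans_eq rfl
        _ = s := div_one s
    have hlog := log_ineq_pos hu0
    have h1 : (z - 1) * Real.log (1 + u) ≤ (z - 1) * (u - u ^ 2 / (2 * (1 + u))) :=
      mul_le_mul_of_nonneg_left hlog (by linarith)
    have h2 : (z - 1) * (u ^ 2 / (2 * (1 + u))) ≥ s ^ 2 / (4 * (1 + s)) := by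
      have ha : (z - 1) * (u ^ 2 / (2 * (1 + u))) ≥ (z / 2) * (u ^ 2 / (2 * (1 + u))) := by
        apply mul_le_mul_of_nonneg_right (by linarith) (by positivity)
      have hb : (z / 2) * (u ^ 2 / (2 * (1 + u))) = s ^ 2 / (4 * (1 + u)) := by
        field_simp
        nlinarith [hzu2]
      have hc : s ^ 2 / (4 * (1 + s)) ≤ s ^ 2 / (4 * (1 + u)) :=
        div_le_div_of_nonneg_left (sq_nonneg s) (by positivity) (by linarith)
      linarith [ha, hc, hb ▸ ha]
    have h4 : -(s ^ 2) / (4 * (1 + s)) ≤ 2 - s / 8 := by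
      rw [div_le_iff₀ (by positivity : (0:ℝ) < 4 * (1 + s))]
      nlinarith [sq_nonneg s]
    rw [abs_of_nonneg hs0]
    have hexp : (z - 1) * (u - u ^ 2 / (2 * (1 + u))) - w * s
        = -u - (z - 1) * (u ^ 2 / (2 * (1 + u))) := by
      rw [hws]; ring
    have h5 : -(s ^ 2) / (4 * (1 + s)) = -(s ^ 2 / (4 * (1 + s))) := neg_div _ _
    linarith [h1, h2, hu0, h4, hexp ▸ (sub_le_sub_right h1 (w * s))]
  · -- negative case
    have hu0 : u < 0 := div_neg_of_neg_of_pos hs0 hw0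
    have hlog := log_ineq_neg hu1 hu0.le
    have h1 : (z - 1) * Real.log (1 + u) ≤ (z - 1) * (u - u ^ 2 / 2) :=
      mul_le_mul_of_nonneg_left hlog (by linarith)
    have h2 : (z - 1) * (u ^ 2 / 2) ≥ s ^ 2 / 4 := by
      have ha : (z - 1) * (u ^ 2 / 2) ≥ (z / 2) * (u ^ 2 / 2) :=
        mul_le_mul_of_nonneg_right (by linarith) (by positivity)
      have hb : (z / 2) * (u ^ 2 / 2) = s ^ 2 / 4 := by
        rw [← hzu2]; ring
      linarith
    have h3 : -u ≤ -s := by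
      rw [hudef, neg_div' ]
      calc (-s) / w ≤ (-s) / 1 :=
        div_le_div_of_nonneg_left (by linarith) (by norm_num) (by linarith)
        _ = -s := div_one _
    have h4 : -s - s ^ 2 / 4 ≤ 2 + s / 8 := by nlinarith [sq_nonneg (s + 9/4)]
    rw [abs_of_neg hs0]
    have hexp : (z - 1) * (u - u ^ 2 / 2) - w * s = -u - (z - 1) * (u ^ 2 / 2) := by
      rw [hws]; ring
    linarith [sub_le_sub_right h1 (w * s), hexp ▸ (sub_le_sub_right h1 (w * s))]

lemma integral_Ioi_add (f : ℝ → ℝ) (a d : ℝ) :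
    ∫ x in Ioi a, f (x + d) = ∫ x in Ioi (a + d), f x := by
  simpa using (measurePreserving_add_right (volume : Measure ℝ) d).setIntegral_preimage_emb
    (measurableEmbedding_addRight d) f (Ioi (a + d))

/-- change of variables t = z + √z s -/
lemma cv (z : ℝ) (hz : 0 < z) (a : ℝ) (f : ℝ → ℝ) :
    ∫ t in Ioi a, f t = Real.sqrt z * ∫ s in Ioi ((a - z) / Real.sqrt z), f (z + Real.sqrt z * s) := by
  set w := Real.sqrt z with hwdef
  have hw0 : 0 < w := Real.sqrt_pos.mpr hz
  have h1 : ∫ s in Ioi ((a - z) / w), (fun y => f (z + y)) (w * s)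
      = w⁻¹ • ∫ y in Ioi (w * ((a - z) / w)), (fun y => f (z + y)) y :=
    MeasureTheory.integral_comp_mul_left_Ioi (fun y => f (z + y)) _ hw0
  have h2 : w * ((a - z) / w) = a - z := by field_simp
  rw [h2] at h1
  have h3 : ∫ y in Ioi (a - z), f (z + y) = ∫ t in Ioi a, f t := by
    have := integral_Ioi_add f (a - z) z
    simpa [add_comm, sub_add_cancel] using this
  simp only at h1
  rw [h3] at h1
  rw [smul_eq_mul] at h1
  rw [h1]
  field_simp

lemma efun_eq (z : ℝ) (hz : 0 < z) {s : ℝ} (hs : -Real.sqrt z < s) :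
    (z + Real.sqrt z * s) ^ (z - 1) * Real.exp (-(z + Real.sqrt z * s))
      = z ^ (z - 1) * Real.exp (-z) * efun z s := by
  set w := Real.sqrt z with hwdef
  have hw0 : 0 < w := Real.sqrt_pos.mpr hz
  have hwsq : w ^ 2 = z := Real.sq_sqrt hz.le
  have hp : (0:ℝ) < 1 + s / w := by
    have : -1 < s / w := by
      rw [lt_div_iff₀ hw0]
      linarith
    linarith
  have hzs : z + w * s = z * (1 + s / w) := by
    field_simp
    nlinarith [hwsq]
  rw [hzs, Real.mul_rpow hz.le hp.le, Real.rpow_def_of_pos hp, efun]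
  rw [show -(z * (1 + s / w)) = -z + -(w * s) by nlinarith [hwsq], Real.exp_add]
  rw [Real.exp_sub, mul_comm (Real.log (1 + s / w)) (z-1)]
  ring_nf
  rw [Real.exp_neg (s * w)]
  rw [← hwdef]
  ring

lemma upperGamma_eq (z : ℝ) (hz : 0 < z) :
    upperGamma z z = Real.sqrt z * (z ^ (z - 1) * Real.exp (-z)) * ∫ s in Ioi (0:ℝ), efun z s := by
  have hw0 : 0 < Real.sqrt z := Real.sqrt_pos.mpr hz
  rw [upperGamma, cv z hz z (fun t => t ^ (z - 1) * Real.exp (-t))]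
  have h0 : (z - z) / Real.sqrt z = 0 := by simp
  rw [h0]
  have hcongr : ∫ s in Ioi (0:ℝ), (z + Real.sqrt z * s) ^ (z - 1) * Real.exp (-(z + Real.sqrt z * s))
      = ∫ s in Ioi (0:ℝ), z ^ (z - 1) * Real.exp (-z) * efun z s := by
    apply setIntegral_congr_fun measurableSet_Ioi
    intro s hs
    exact efun_eq z hz (by simp only [mem_Ioi] at hs; linarith)
  rw [hcongr, MeasureTheory.integral_const_mul]
  ring

lemma Gamma_eq (z : ℝ) (hz : 0 < z) :
    Real.Gamma z = Real.sqrt z * (z ^ (z - 1) * Real.exp (-z))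
      * ∫ s in Ioi (-Real.sqrt z), efun z s := by
  have hw0 : 0 < Real.sqrt z := Real.sqrt_pos.mpr hz
  rw [Real.Gamma_eq_integral hz]
  have h1 : ∫ x in Ioi (0:ℝ), Real.exp (-x) * x ^ (z - 1)
      = ∫ t in Ioi (0:ℝ), t ^ (z - 1) * Real.exp (-t) := by
    apply setIntegral_congr_fun measurableSet_Ioi
    intro t _; ring
  rw [h1, cv z hz 0 (fun t => t ^ (z - 1) * Real.exp (-t))]
  have h0 : (0 - z) / Real.sqrt z = -Real.sqrt z := by
    rw [zero_sub, neg_div, Real.div_sqrt]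
  rw [h0]
  have hcongr : ∫ s in Ioi (-Real.sqrt z), (z + Real.sqrt z * s) ^ (z - 1)
        * Real.exp (-(z + Real.sqrt z * s))
      = ∫ s in Ioi (-Real.sqrt z), z ^ (z - 1) * Real.exp (-z) * efun z s := by
    apply setIntegral_congr_fun measurableSet_Ioi
    intro s hs
    exact efun_eq z hz (by simpa using hs)
  rw [hcongr, MeasureTheory.integral_const_mul]
  ring

lemma ratio_eq (z : ℝ) (hz : 0 < z) :
    upperGamma z z / Real.Gamma z
      = (∫ s in Ioi (0:ℝ), efun z s) / ∫ s in Ioi (-Real.sqrt z), efun z s := by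
  have hc : 0 < Real.sqrt z * (z ^ (z - 1) * Real.exp (-z)) := by positivity
  rw [upperGamma_eq z hz, Gamma_eq z hz]
  rw [mul_div_mul_left _ _ hc.ne']

lemma efun_measurable (z : ℝ) : Measurable (efun z) := by
  unfold efun
  exact (((Real.measurable_log.comp (measurable_const.add (measurable_id.div_const _))).const_mul
    (z - 1)).sub (measurable_id.const_mul _)).exp

lemma efun_le_bound {z s : ℝ} (hz : 4 ≤ z) (hs : -Real.sqrt z < s) :
    efun z s ≤ Real.exp 2 * Real.exp (-(|s| / 8)) := by
  rw [← Real.exp_add]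
  unfold efun
  exact Real.exp_le_exp.mpr (le_trans (exponent_bound hz hs) (by ring_nf; rfl))

lemma integrableOn_bound_Ioi : IntegrableOn (fun s : ℝ => Real.exp (-(|s| / 8))) (Ioi 0) := by
  apply (exp_neg_integrableOn_Ioi 0 (by norm_num : (0:ℝ) < 1/8)).congr_fun _ measurableSet_Ioi
  intro x hx
  simp only [mem_Ioi] at hx
  simp only [abs_of_pos hx]
  ring_nf

lemma integrable_bound : Integrable (fun s : ℝ => Real.exp 2 * Real.exp (-(|s| / 8))) := by
  apply Integrable.const_mul
  rw [← integrableOn_univ, ← @Iio_union_Ici _ _ (0 : ℝ), integrableOn_union,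
    integrableOn_Ici_iff_integrableOn_Ioi]
  refine ⟨?_, integrableOn_bound_Ioi⟩
  rw [← (Measure.measurePreserving_neg (volume : Measure ℝ)).integrableOn_comp_preimage
      (Homeomorph.neg ℝ).measurableEmbedding]
  simp only [Function.comp_def, abs_neg, neg_preimage, neg_Iio, neg_neg, neg_zero]
  exact integrableOn_bound_Ioi

lemma tendsto_A :
    Tendsto (fun z : ℝ => ∫ s in Ioi (0:ℝ), efun z s) atTop
      (𝓝 (∫ s in Ioi (0:ℝ), Real.exp (-s ^ 2 / 2))) := by
  apply MeasureTheory.tendsto_integral_filter_of_dominated_convergence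
    (bound := fun s => Real.exp 2 * Real.exp (-(|s| / 8)))
  · exact Eventually.of_forall fun z => (efun_measurable z).aestronglyMeasurable
  · filter_upwards [eventually_ge_atTop (4:ℝ)] with z hz
    filter_upwards [ae_restrict_mem measurableSet_Ioi] with s hs
    simp only [mem_Ioi] at hs
    have hsqrt : -Real.sqrt z < s := by
      have := Real.sqrt_nonneg z
      linarith
    have hpos : (0:ℝ) < efun z s := Real.exp_pos _
    rw [Real.norm_eq_abs, abs_of_pos hpos]
    exact efun_le_bound hz hsqrt
  · exact integrable_bound.restrict
  · exact Eventually.of_forall fun s => tendsto_efun s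

lemma tendsto_B :
    Tendsto (fun z : ℝ => ∫ s in Ioi (-Real.sqrt z), efun z s) atTop
      (𝓝 (∫ s : ℝ, Real.exp (-s ^ 2 / 2))) := by
  have hrw : ∀ z : ℝ, ∫ s in Ioi (-Real.sqrt z), efun z s
      = ∫ s : ℝ, (Ioi (-Real.sqrt z)).indicator (efun z) s := fun z =>
    (MeasureTheory.integral_indicator measurableSet_Ioi).symm
  simp_rw [hrw]
  apply MeasureTheory.tendsto_integral_filter_of_dominated_convergence
    (bound := fun s => Real.exp 2 * Real.exp (-(|s| / 8)))
  · exact Eventually.of_forall fun z =>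
      ((efun_measurable z).indicator measurableSet_Ioi).aestronglyMeasurable
  · filter_upwards [eventually_ge_atTop (4:ℝ)] with z hz
    apply Eventually.of_forall
    intro s
    by_cases hmem : s ∈ Ioi (-Real.sqrt z)
    · have hpos : (0:ℝ) < efun z s := Real.exp_pos _
      rw [indicator_of_mem hmem, Real.norm_eq_abs, abs_of_pos hpos]
      exact efun_le_bound hz (mem_Ioi.mp hmem)
    · rw [indicator_of_notMem hmem, norm_zero]
      positivity
  · exact integrable_bound
  · apply Eventually.of_forall
    intro s
    apply (tendsto_efun s).congr'
    filter_upwards [eventually_gt_atTop (s ^ 2)] with z hz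
    have h1 : |s| < Real.sqrt z := by
      rw [← Real.sqrt_sq_eq_abs]
      exact Real.sqrt_lt_sqrt (sq_nonneg s) hz
    have hmem : s ∈ Ioi (-Real.sqrt z) := by
      simp only [mem_Ioi]
      have := neg_abs_le s
      linarith
    rw [indicator_of_mem hmem]

open Real in
lemma gauss_Ioi : ∫ s in Ioi (0:ℝ), Real.exp (-s ^ 2 / 2) = Real.sqrt (π / (1/2)) / 2 := by
  rw [← integral_gaussian_Ioi (1/2)]
  apply setIntegral_congr_fun measurableSet_Ioi
  intro s _
  ring_nf

open Real in
lemma gauss_total : ∫ s : ℝ, Real.exp (-s ^ 2 / 2) = Real.sqrt (π / (1/2)) := by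
  rw [← integral_gaussian (1/2)]
  apply integral_congr_ae
  apply Eventually.of_forall
  intro s
  ring_nf

/-- As `z → ∞`, `r̃(1, 2z/(z-1)², z) = e^z Γ(z,z)/Γ(z)` is asymptotically equivalent to
`(1/2)e^z`; equivalently, `Γ(z,z)/Γ(z) → 1/2`. -/
theorem rtildeExt_asymp_half_exp :
    (fun z : ℝ => Real.exp z * upperGamma z z / Real.Gamma z) ~[atTop]
      (fun z : ℝ => (1 / 2) * Real.exp z) ∧
    Tendsto (fun z : ℝ => upperGamma z z / Real.Gamma z) atTop (nhds (1 / 2)) := by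
  have hpi : Real.sqrt (Real.pi / (1/2)) ≠ 0 := by
    have := Real.pi_pos
    positivity
  have hmain : Tendsto (fun z : ℝ => upperGamma z z / Real.Gamma z) atTop (𝓝 (1/2)) := by
    have hdiv := tendsto_A.div tendsto_B (by rw [gauss_total]; exact hpi)
    have hval : (∫ s in Ioi (0:ℝ), Real.exp (-s ^ 2 / 2)) / (∫ s : ℝ, Real.exp (-s ^ 2 / 2))
        = 1/2 := by
      rw [gauss_Ioi, gauss_total]
      field_simp
    rw [hval] at hdiv
    apply hdiv.congr'
    filter_upwards [eventually_ge_atTop (1:ℝ)] with z hz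
    exact (ratio_eq z (by linarith)).symm
  refine ⟨?_, hmain⟩
  rw [Asymptotics.isEquivalent_iff_tendsto_one]
  · have h2 : Tendsto (fun z : ℝ => 2 * (upperGamma z z / Real.Gamma z)) atTop (𝓝 1) := by
      have := hmain.const_mul (2:ℝ)
      norm_num at this
      exact this
    apply h2.congr
    intro z
    have he : Real.exp z ≠ 0 := Real.exp_ne_zero z
    simp only [Pi.div_apply]
    rw [mul_div_assoc, eq_div_iff (by positivity : (1:ℝ)/2 * Real.exp z ≠ 0)]
    ring
  · exact Eventually.of_forall fun z => by positivity
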